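/- Let G be an s-vertex-connected graph (more precisely: let S be an s-vertex cut of G with components C_1,…,C_k of G−S having sizes c_1,…,c_k). If G is recursively partitionable, then the semistar K_s(c_1,…,c_k) is recursively partitionable. -/

import Mathlib

open Finset

/-- `G.IsRP A` : the subgraph of `G` induced by the vertex set `A` is recursively
partitionable (RP): either `|A| = 1`, or `G[A]` is connected and for every integer partition
`a₁, …, a_k` (with `k ≥ 2`) of `|A|` there is a partition of `A` into parts of exactly these
sizes, each of which again induces an RP subgraph.  (The guard `B.card < A.card` is
automatically satisfied by every part of such a partition; it is only needed for
well-foundedness of the recursion.) -/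
def SimpleGraph.IsRP {V : Type} [DecidableEq V] (G : SimpleGraph V) (A : Finset V) : Prop :=
  A.card = 1 ∨ ((G.induce (A : Set V)).Connected ∧
    ∀ l : List ℕ, (∀ a ∈ l, 0 < a) → 2 ≤ l.length → l.sum = A.card →
      ∃ P : List (Finset V), P.map Finset.card = l ∧ P.Pairwise _root_.Disjoint ∧
        P.foldr (· ∪ ·) ∅ = A ∧ ∀ B ∈ P, ∀ _ : B.card < A.card, G.IsRP B)
termination_by A.card

/-- The join `G₀ + (G₁ ∪ ⋯ ∪ G_k)` of a graph `G₀` with the disjoint union of the graphs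
`G i`, `i : Fin k`: every vertex of `G₀` is joined to every other vertex. -/
def SimpleGraph.repJoin {V₀ : Type} {k : ℕ} {V : Fin k → Type}
    (G₀ : SimpleGraph V₀) (G : ∀ i, SimpleGraph (V i)) :
    SimpleGraph (V₀ ⊕ Σ i, V i) where
  Adj a b :=
    match a, b with
    | Sum.inl x, Sum.inl y => G₀.Adj x y
    | Sum.inl _, Sum.inr _ => True
    | Sum.inr _, Sum.inl _ => True
    | Sum.inr x, Sum.inr y => ∃ h : x.1 = y.1, (G y.1).Adj (h ▸ x.2) y.2
  symm := by
    constructor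
    rintro (x | ⟨i, x⟩) (y | ⟨j, y⟩) h
    · exact G₀.adj_symm h
    · trivial
    · trivial
    · obtain ⟨h, hadj⟩ := h
      dsimp only at h
      subst h
      exact ⟨rfl, (G i).adj_symm hadj⟩
  loopless := by
    constructor
    rintro (x | ⟨i, x⟩) h
    · exact G₀.irrefl h
    · obtain ⟨h', hadj⟩ := h
      exact (G i).irrefl hadj

/-- The semistar `K_{b₀}(c₁, …, c_k)`: the join of the clique `K_{b₀}` with the disjoint
union of the cliques `K_{c i}`, `i : Fin k`. -/
def SimpleGraph.semistar (b₀ : ℕ) {k : ℕ} (c : Fin k → ℕ) :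
    SimpleGraph (Fin b₀ ⊕ Σ i, Fin (c i)) :=
  SimpleGraph.repJoin (⊤ : SimpleGraph (Fin b₀)) (fun i => (⊤ : SimpleGraph (Fin (c i))))

lemma isRP_map {V W : Type} [DecidableEq V] [DecidableEq W]
    (G : SimpleGraph V) (H : SimpleGraph W) (f : V ≃ W)
    (hf : ∀ u v, G.Adj u v → H.Adj (f u) (f v)) :
    ∀ A : Finset V, G.IsRP A → H.IsRP (A.image f) := by
  intro A
  induction A using Finset.strongInduction with
  | _ A ih =>
  intro hA
  unfold SimpleGraph.IsRP at hA ⊢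
  rcases hA with h1 | ⟨hconn, hpart⟩
  · left; rwa [Finset.card_image_of_injective _ f.injective]
  right
  constructor
  · -- connectedness
    refine hconn.map ⟨fun v => ⟨f v.1, by
        simp only [Finset.coe_image]; exact Set.mem_image_of_mem f v.2⟩,
      fun hab => hf _ _ hab⟩ ?_
    rintro ⟨w, hw⟩
    simp only [Finset.coe_image, Set.mem_image, Finset.mem_coe] at hw
    obtain ⟨v, hv, rfl⟩ := hw
    exact ⟨⟨v, hv⟩, rfl⟩
  · intro l hl hl2 hsum
    rw [Finset.card_image_of_injective _ f.injective] at hsum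
    obtain ⟨P, hPl, hPd, hPu, hPrp⟩ := hpart l hl hl2 hsum
    refine ⟨P.map (·.image f), ?_, ?_, ?_, ?_⟩
    · rw [List.map_map]
      rw [← hPl]
      congr 1
      funext B
      exact (Finset.card_image_of_injective _ f.injective)
    · rw [List.pairwise_map]
      exact hPd.imp (fun h => (Finset.disjoint_image f.injective).mpr h)
    · rw [← hPu]
      clear hPl hPd hPu hPrp
      induction P with
      | nil => simp
      | cons B P ihp => simp [ihp, Finset.image_union]
    · intro B' hB' hcard
      rw [List.mem_map] at hB'
      obtain ⟨B, hB, rfl⟩ := hB'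
      -- B.card < A.card
      have hBsub : B ⊆ A := by
        rw [← hPu]
        intro x hx
        clear hPl hPd hPu hPrp hcard
        induction P with
        | nil => simp at hB
        | cons C P ihp =>
          simp only [List.mem_cons] at hB
          simp only [List.foldr_cons, Finset.mem_union]
          rcases hB with rfl | hB
          · exact Or.inl hx
          · exact Or.inr (ihp hB)
      have hlt : B.card < A.card := by
        rw [Finset.card_image_of_injective _ f.injective, Finset.card_image_of_injective _ f.injective] at hcard
        exact hcard
      have hBA : B ⊂ A := ssubset_of_subset_of_ne hBsub (by rintro rfl; exact lt_irrefl _ hlt)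
      exact ih B hBA (hPrp B hB hlt)

lemma sigma_adj_aux {k : ℕ} {c : Fin k → ℕ} (x y : Σ i, Fin (c i)) (hne : x ≠ y)
    (h1 : x.1 = y.1) : ∃ h : x.1 = y.1, ((⊤ : SimpleGraph (Fin (c y.1)))).Adj (h ▸ x.2) y.2 := by
  obtain ⟨i, a⟩ := x
  obtain ⟨j, b⟩ := y
  dsimp only at h1
  subst h1
  exact ⟨rfl, fun hab => hne (by cases hab; rfl)⟩

/-- If `S` is an `s`-vertex cut of a recursively partitionable graph `G` and the components
of `G − S` have sizes `c₁, …, c_k`, then the semistar `K_s(c₁, …, c_k)` is recursively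
partitionable. -/
theorem semistar_isRP_of_isRP {V : Type} [Fintype V] [DecidableEq V]
    (G : SimpleGraph V) (S : Finset V) (s k : ℕ) (hs : S.card = s)
    (c : Fin k → ℕ)
    (e : (G.induce ((↑S : Set V)ᶜ)).ConnectedComponent ≃ Fin k)
    (hc : ∀ i : Fin k, c i = Nat.card (e.symm i).supp)
    (hcut : ¬ (G.induce ((↑S : Set V)ᶜ)).Connected) (hk : 2 ≤ k)
    (hG : G.IsRP Finset.univ) :
    (SimpleGraph.semistar s c).IsRP Finset.univ := by
  haveI hdec : DecidablePred (· ∈ (↑S : Set V)) := fun v => S.decidableMem v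
  let F : ((↑S : Set V)ᶜ : Set V) → Fin k := fun v => e ((G.induce ((↑S : Set V)ᶜ)).connectedComponentMk v)
  have hfib : ∀ i, Fintype.card {v : ((↑S : Set V)ᶜ : Set V) // F v = i} = c i := by
    intro i
    rw [← Nat.card_eq_fintype_card, hc i]
    refine Nat.card_congr (Equiv.subtypeEquivRight fun v => ?_)
    rw [SimpleGraph.ConnectedComponent.mem_supp_iff]
    show e _ = i ↔ _
    exact Equiv.apply_eq_iff_eq_symm_apply e
  let f₀ : (↑S : Set V) ≃ Fin s :=
    Fintype.equivFinOfCardEq (by rw [← hs]; exact Fintype.card_coe S)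
  let g : ((↑S : Set V)ᶜ : Set V) ≃ Σ i, Fin (c i) :=
    (Equiv.sigmaFiberEquiv F).symm.trans
      (Equiv.sigmaCongrRight fun i => Fintype.equivFinOfCardEq (hfib i))
  let f : V ≃ (Fin s ⊕ Σ i, Fin (c i)) :=
    (Equiv.Set.sumCompl (↑S : Set V)).symm.trans (Equiv.sumCongr f₀ g)
  have hmem : ∀ u, f u = Sum.map f₀ g ((Equiv.Set.sumCompl (↑S : Set V)).symm u) :=
    fun u => rfl
  have hpos : ∀ u (hu : u ∈ (↑S : Set V)), f u = Sum.inl (f₀ ⟨u, hu⟩) := by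
    intro u hu
    rw [hmem, Equiv.Set.sumCompl_symm_apply_of_mem hu]
    rfl
  have hneg : ∀ u (hu : u ∉ (↑S : Set V)), f u = Sum.inr (g ⟨u, hu⟩) := by
    intro u hu
    rw [hmem, Equiv.Set.sumCompl_symm_apply_of_notMem hu]
    rfl
  have hadj : ∀ u v, G.Adj u v → (SimpleGraph.semistar s c).Adj (f u) (f v) := by
    intro u v huv
    by_cases hu : u ∈ (↑S : Set V) <;> by_cases hv : v ∈ (↑S : Set V)
    · rw [hpos u hu, hpos v hv]
      exact fun h => huv.ne (Subtype.mk_eq_mk.mp (f₀.injective h))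
    · rw [hpos u hu, hneg v hv]; trivial
    · rw [hneg u hu, hpos v hv]; trivial
    · rw [hneg u hu, hneg v hv]
      have hind : (G.induce ((↑S : Set V)ᶜ)).Adj ⟨u, hu⟩ ⟨v, hv⟩ := huv
      have hcc : F ⟨u, hu⟩ = F ⟨v, hv⟩ :=
        congrArg e (SimpleGraph.ConnectedComponent.sound hind.reachable)
      have hfst : (g ⟨u, hu⟩).1 = (g ⟨v, hv⟩).1 := hcc
      have hne : g ⟨u, hu⟩ ≠ g ⟨v, hv⟩ := fun hEq =>
        huv.ne (Subtype.mk_eq_mk.mp (g.injective hEq))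
      exact sigma_adj_aux _ _ hne hfst
  have := isRP_map G (SimpleGraph.semistar s c) f hadj Finset.univ hG
  rwa [Finset.image_univ_equiv] at this
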